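/- Let X_1, ..., X_n be i.i.d. Pareto(α) random variables, i.e., with distribution function F(x) = 1 - x^{-α} for x ≥ 1 (and F(x)=0 for x < 1), where α > 0. Then for any κ ∈ (0,1), the probability P(X_{(n-1)} ≤ κ X_{(n)}) converges to κ^α as n → ∞. -/

import Mathlib

open MeasureTheory ProbabilityTheory Set Filter

noncomputable def parFp (α x : ℝ) : ℝ := if 1 ≤ x then 1 - x ^ (-α) else 0

noncomputable def parRho (α : ℝ) : Measure ℝ :=
  MeasureTheory.volume.withDensity
    ((Set.Ioi (1:ℝ)).indicator fun x => ENNReal.ofReal (α * x ^ (-α-1)))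

lemma parFp_nonneg {α : ℝ} (hα : 0 < α) (x : ℝ) : 0 ≤ parFp α x := by
  unfold parFp
  split_ifs with h
  · have : x ^ (-α) ≤ 1 :=
      Real.rpow_le_one_of_one_le_of_nonpos h (neg_nonpos.mpr hα.le)
    linarith
  · exact le_rfl

lemma parRho_Iic {α : ℝ} (hα : 0 < α) (x : ℝ) :
    parRho α (Set.Iic x) = ENNReal.ofReal (parFp α x) := by
  rw [parRho, withDensity_apply _ measurableSet_Iic, lintegral_indicator measurableSet_Ioi,
    Measure.restrict_restrict measurableSet_Ioi, Set.Ioi_inter_Iic]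
  by_cases h1x : 1 ≤ x
  · have hcont : ContinuousOn (fun t : ℝ => α * t ^ (-α-1)) (Set.Icc 1 x) := by
      apply ContinuousOn.mul continuousOn_const
      exact ContinuousOn.rpow_const continuousOn_id
        (fun t ht => Or.inl (one_pos.trans_le ht.1).ne')
    have hInt : IntegrableOn (fun t : ℝ => α * t ^ (-α-1)) (Set.Ioc 1 x) :=
      (hcont.integrableOn_compact isCompact_Icc).mono_set Set.Ioc_subset_Icc_self
    rw [← ofReal_integral_eq_lintegral_ofReal hInt]
    · congr 1
      have hident : ∫ t in Set.Ioc 1 x, α * t ^ (-α-1) = ∫ t in (1:ℝ)..x, α * t ^ (-α-1) :=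
        (intervalIntegral.integral_of_le h1x).symm
      rw [hident]
      have hFTC : ∫ t in (1:ℝ)..x, α * t ^ (-α-1)
          = (fun t : ℝ => -(t ^ (-α))) x - (fun t : ℝ => -(t ^ (-α))) 1 := by
        apply intervalIntegral.integral_eq_sub_of_hasDerivAt
        · intro t ht
          rw [Set.uIcc_of_le h1x] at ht
          have ht0 : t ≠ 0 := (one_pos.trans_le ht.1).ne'
          have h := (Real.hasDerivAt_rpow_const (x := t) (p := -α) (Or.inl ht0)).neg
          rw [neg_mul, neg_neg] at h
          exact h
        · rw [intervalIntegrable_iff_integrableOn_Ioc_of_le h1x]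
          exact hInt
      rw [hFTC]
      simp only [Real.one_rpow, parFp, if_pos h1x]
      ring
    · filter_upwards [ae_restrict_mem measurableSet_Ioc] with t ht
      have ht0 : (0:ℝ) ≤ t := (one_pos.trans ht.1).le
      positivity
  · rw [Set.Ioc_eq_empty (fun hlt => h1x hlt.le), Measure.restrict_empty, lintegral_zero_measure]
    simp [parFp, h1x]

lemma parFp_nonpos_of_le_one {α x : ℝ} (hx : x ≤ 1) : parFp α x ≤ 0 := by
  unfold parFp
  split_ifs with h
  · have : x = 1 := le_antisymm hx h
    simp [this, Real.one_rpow]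
  · exact le_rfl

lemma parFp_measurable (α : ℝ) : Measurable (parFp α) := by
  unfold parFp
  apply Measurable.ite (measurableSet_le measurable_const measurable_id)
  · exact (measurable_id.pow_const (-α)).const_sub 1
  · exact measurable_const

lemma par_lintegral {α κ : ℝ} (hα : 0 < α) (hκ0 : 0 < κ) (hκ1 : κ < 1) (m : ℕ) (hm : 1 ≤ m) :
    ∫⁻ x, (ENNReal.ofReal (parFp α (κ * x))) ^ m ∂(parRho α)
      = ENNReal.ofReal (κ ^ α / (m + 1)) := by
  have hκinv : (1:ℝ) < 1/κ := by rw [lt_div_iff₀ hκ0]; linarith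
  have hκinv0 : (0:ℝ) < 1/κ := by positivity
  set φ : ℝ → ℝ := fun x => α * x ^ (-α-1) * (1 - (κ*x) ^ (-α)) ^ m with hφdef
  set g : ℝ → ℝ := fun x => κ ^ α / (m+1) * (1 - (κ*x) ^ (-α)) ^ (m+1) with hgdef
  have hf_meas : Measurable fun x => (ENNReal.ofReal (parFp α (κ * x))) ^ m :=
    ((ENNReal.measurable_ofReal.comp ((parFp_measurable α).comp
      (measurable_id.const_mul κ))).pow_const m)
  have hd_meas : Measurable ((Set.Ioi (1:ℝ)).indicator fun x => ENNReal.ofReal (α * x ^ (-α-1))) :=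
    (ENNReal.measurable_ofReal.comp ((measurable_id.pow_const (-α-1)).const_mul α)).indicator
      measurableSet_Ioi
  rw [parRho, lintegral_withDensity_eq_lintegral_mul _ hd_meas hf_meas]
  have hptwise : ∀ x : ℝ,
      ((Set.Ioi (1:ℝ)).indicator (fun x => ENNReal.ofReal (α * x ^ (-α-1))) * fun x =>
        (ENNReal.ofReal (parFp α (κ * x))) ^ m) x
      = (Set.Ioi (1:ℝ)).indicator
          (fun x => ENNReal.ofReal (α * x ^ (-α-1)) * (ENNReal.ofReal (parFp α (κ * x))) ^ m) x := by
    intro x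
    by_cases hx : x ∈ Set.Ioi (1:ℝ) <;> simp [Set.indicator, hx]
  rw [lintegral_congr hptwise, lintegral_indicator measurableSet_Ioi]
  have hsplit : Set.Ioi (1:ℝ) = Set.Ioc 1 (1/κ) ∪ Set.Ioi (1/κ) :=
    (Set.Ioc_union_Ioi_eq_Ioi hκinv.le).symm
  rw [hsplit, lintegral_union measurableSet_Ioi (Set.Ioc_disjoint_Ioi le_rfl)]
  have hzero : ∫⁻ x in Set.Ioc 1 (1/κ),
      ENNReal.ofReal (α * x ^ (-α-1)) * (ENNReal.ofReal (parFp α (κ * x))) ^ m = 0 := by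
    rw [setLIntegral_congr_fun measurableSet_Ioc
      (fun x hx => ?_), lintegral_zero]
    have hκx : κ * x ≤ 1 := by
      have := hx.2
      calc κ * x ≤ κ * (1/κ) := by nlinarith
        _ = 1 := by field_simp
    have h0 : ENNReal.ofReal (parFp α (κ * x)) = 0 :=
      ENNReal.ofReal_eq_zero.mpr (parFp_nonpos_of_le_one hκx)
    rw [h0, zero_pow (by omega), mul_zero]
  rw [hzero, zero_add]
  -- derivative facts
  have hderiv : ∀ x ∈ Set.Ici (1/κ), HasDerivAt g (φ x) x := by
    intro x hx
    have hx0 : (0:ℝ) < x := lt_of_lt_of_le hκinv0 hx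
    have hκx0 : (0:ℝ) < κ * x := by positivity
    have hlin : HasDerivAt (fun y : ℝ => κ * y) κ x := by
      simpa using (hasDerivAt_id x).const_mul κ
    have hu : HasDerivAt (fun y : ℝ => (κ*y) ^ (-α)) (-α * (κ*x) ^ (-α-1) * κ) x :=
      (Real.hasDerivAt_rpow_const (x := κ*x) (p := -α) (Or.inl hκx0.ne')).comp x hlin
    have hw : HasDerivAt (fun y : ℝ => 1 - (κ*y) ^ (-α)) (α * (κ*x) ^ (-α-1) * κ) x := by
      have := hu.const_sub 1
      have heq : -(-α * (κ*x) ^ (-α-1) * κ) = α * (κ*x) ^ (-α-1) * κ := by ring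
      rwa [heq] at this
    have hg : HasDerivAt g (κ ^ α / ((m:ℝ)+1) *
        (((m:ℝ)+1) * (1 - (κ*x) ^ (-α)) ^ m * (α * (κ*x) ^ (-α-1) * κ))) x := by
      have := (hw.pow (m+1)).const_mul (κ ^ α / ((m:ℝ)+1))
      simp only [Nat.add_sub_cancel, Nat.cast_add, Nat.cast_one] at this
      exact this
    have hval : κ ^ α / (m+1) * ((m+1) * (1 - (κ*x) ^ (-α)) ^ m * (α * (κ*x) ^ (-α-1) * κ))
        = φ x := by
      have hm1 : ((m:ℝ)+1) ≠ 0 := by positivity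
      have hmr : (κ*x) ^ (-α-1) = κ ^ (-α-1) * x ^ (-α-1) := Real.mul_rpow hκ0.le hx0.le
      have hκcol : κ ^ α * κ ^ (-α-1) * κ = 1 := by
        have h1 : κ ^ α * κ ^ (-α-1) * κ ^ (1:ℝ) = 1 := by
          rw [← Real.rpow_add hκ0, ← Real.rpow_add hκ0,
            show α + (-α-1) + 1 = 0 by ring, Real.rpow_zero]
        simpa [Real.rpow_one] using h1
      rw [hmr, hφdef]
      field_simp
      linear_combination ((1 - (κ*x) ^ (-α)) ^ m) * hκcol
    rw [← hval]
    exact hg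
  have hpos : ∀ x ∈ Set.Ioi (1/κ), 0 ≤ φ x := by
    intro x hx
    have hx0 : (0:ℝ) < x := lt_trans hκinv0 hx
    have hκx1 : (1:ℝ) ≤ κ * x := by
      have := (div_lt_iff₀ hκ0).mp hx
      linarith
    have hle1 : (κ * x) ^ (-α) ≤ 1 :=
      Real.rpow_le_one_of_one_le_of_nonpos hκx1 (by linarith)
    exact mul_nonneg (by positivity) (pow_nonneg (by linarith) m)
  have htend : Tendsto g atTop (nhds (κ ^ α / ((m:ℝ)+1))) := by
    have h1 : Tendsto (fun y : ℝ => (κ * y) ^ (-α)) atTop (nhds 0) :=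
      (tendsto_rpow_neg_atTop hα).comp (Filter.Tendsto.const_mul_atTop hκ0 tendsto_id)
    have h2 : Tendsto (fun y : ℝ => κ ^ α / ((m:ℝ)+1) * (1 - (κ*y) ^ (-α)) ^ (m+1)) atTop
        (nhds (κ ^ α / ((m:ℝ)+1) * ((1 - 0) ^ (m+1)))) :=
      ((h1.const_sub 1).pow (m+1)).const_mul _
    simpa using h2
  have hg0 : g (1/κ) = 0 := by
    rw [hgdef]
    simp only [mul_one_div_cancel hκ0.ne', Real.one_rpow]
    norm_num
  have hIntOn : IntegrableOn φ (Set.Ioi (1/κ)) :=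
    integrableOn_Ioi_deriv_of_nonneg' hderiv hpos htend
  have hval2 : ∫ x in Set.Ioi (1/κ), φ x = κ ^ α / ((m:ℝ)+1) := by
    rw [integral_Ioi_of_hasDerivAt_of_nonneg' hderiv hpos htend, hg0, sub_zero]
  have hcongr : ∀ x ∈ Set.Ioi (1/κ),
      ENNReal.ofReal (α * x ^ (-α-1)) * ENNReal.ofReal (parFp α (κ*x)) ^ m
        = ENNReal.ofReal (φ x) := by
    intro x hx
    have hx0 : (0:ℝ) < x := lt_trans hκinv0 hx
    have hκx1 : (1:ℝ) ≤ κ * x := by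
      have := (div_lt_iff₀ hκ0).mp hx
      linarith
    have hle1 : (κ * x) ^ (-α) ≤ 1 :=
      Real.rpow_le_one_of_one_le_of_nonpos hκx1 (by linarith)
    have hparF : parFp α (κ*x) = 1 - (κ*x) ^ (-α) := if_pos hκx1
    rw [hparF, ← ENNReal.ofReal_pow (by linarith), ← ENNReal.ofReal_mul (by positivity)]
  rw [setLIntegral_congr_fun measurableSet_Ioi hcongr,
    ← ofReal_integral_eq_lintegral_ofReal hIntOn
      ((ae_restrict_iff' measurableSet_Ioi).mpr (ae_of_all _ hpos)), hval2]

lemma par_measA {Ω : Type*} [MeasurableSpace Ω] (μ : Measure Ω) [IsProbabilityMeasure μ]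
    (X : ℕ → Ω → ℝ) (hmeas : ∀ i, Measurable (X i))
    (hindep : iIndepFun X μ)
    {α : ℝ} (hα : 0 < α)
    (hcdf : ∀ i x, μ {ω | X i ω ≤ x} = ENNReal.ofReal (parFp α x))
    {κ : ℝ} (hκ0 : 0 < κ) (hκ1 : κ < 1)
    (n : ℕ) (hn : 2 ≤ n) (i : Fin n) :
    μ {ω | ∀ j : Fin n, j ≠ i → X j ω ≤ κ * X i ω} = ENNReal.ofReal (κ ^ α / n) := by
  haveI : Nontrivial (Fin n) := Fin.nontrivial_iff_two_le.mpr hn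
  haveI : Nonempty {j : Fin n // j ≠ i} := by
    obtain ⟨j, hj⟩ := exists_ne i
    exact ⟨⟨j, hj⟩⟩
  set M : Ω → ℝ := fun ω => ⨆ j : {j : Fin n // j ≠ i}, X ((j : Fin n) : ℕ) ω with hMdef
  have hM : Measurable M := Measurable.iSup (fun j => hmeas _)
  have hMle : ∀ (ω : Ω) (c : ℝ), M ω ≤ c ↔ ∀ j : Fin n, j ≠ i → X j ω ≤ c := by
    intro ω c
    rw [hMdef]
    simp only
    rw [ciSup_le_iff (Finite.bddAbove_range _)]
    exact ⟨fun h j hj => h ⟨j, hj⟩, fun h j => h j j.2⟩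
  set T : Finset ℕ := (Finset.univ.erase i).image (Fin.val) with hTdef
  have hmemT : ∀ k : ℕ, k ∈ T ↔ ∃ j : Fin n, j ≠ i ∧ (j : ℕ) = k := by
    intro k
    simp [hTdef, Finset.mem_image, Finset.mem_erase]
  have hcardT : T.card = n - 1 := by
    rw [hTdef, Finset.card_image_of_injective _ Fin.val_injective,
      Finset.card_erase_of_mem (Finset.mem_univ i), Finset.card_univ, Fintype.card_fin]
  have hdisj : Disjoint ({(i : ℕ)} : Finset ℕ) T := by
    rw [Finset.disjoint_singleton_left]
    intro hmem
    obtain ⟨j, hj, hjk⟩ := (hmemT _).mp hmem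
    exact hj (Fin.val_injective hjk)
  have hindepXM : IndepFun (X (i : ℕ)) M μ := by
    have h := hindep.indepFun_finset {(i : ℕ)} T hdisj hmeas
    have hmem2 : ∀ j : {j : Fin n // j ≠ i}, ((j : Fin n) : ℕ) ∈ T :=
      fun j => (hmemT _).mpr ⟨j, j.2, rfl⟩
    have hφ : Measurable (fun v : ({x // x ∈ ({(i:ℕ)} : Finset ℕ)} → ℝ) =>
        v ⟨(i:ℕ), Finset.mem_singleton_self _⟩) := measurable_pi_apply _
    have hψ : Measurable (fun v : ({x // x ∈ T} → ℝ) =>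
        ⨆ j : {j : Fin n // j ≠ i}, v ⟨((j : Fin n) : ℕ), hmem2 j⟩) :=
      Measurable.iSup (fun j => measurable_pi_apply _)
    exact h.comp hφ hψ
  haveI : IsProbabilityMeasure (μ.map (X (i:ℕ))) := Measure.isProbabilityMeasure_map (hmeas _).aemeasurable
  haveI : IsProbabilityMeasure (μ.map M) := Measure.isProbabilityMeasure_map hM.aemeasurable
  have hmapX : μ.map (X (i : ℕ)) = parRho α := by
    apply MeasureTheory.Measure.ext_of_Iic
    intro x
    rw [Measure.map_apply (hmeas _) measurableSet_Iic, parRho_Iic hα]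
    exact hcdf i x
  have hprod : μ.map (fun ω => (X (i:ℕ) ω, M ω)) = (μ.map (X (i:ℕ))).prod (μ.map M) :=
    (indepFun_iff_map_prod_eq_prod_map_map (hmeas _).aemeasurable hM.aemeasurable).mp hindepXM
  have hT' : MeasurableSet {p : ℝ × ℝ | p.2 ≤ κ * p.1} :=
    measurableSet_le measurable_snd (measurable_fst.const_mul κ)
  have hseteq : {ω | ∀ j : Fin n, j ≠ i → X j ω ≤ κ * X i ω}
      = (fun ω => (X (i:ℕ) ω, M ω)) ⁻¹' {p : ℝ × ℝ | p.2 ≤ κ * p.1} := by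
    ext ω
    simp only [Set.mem_setOf_eq, Set.mem_preimage]
    exact (hMle ω (κ * X i ω)).symm
  rw [hseteq, ← Measure.map_apply ((hmeas _).prodMk hM) hT', hprod, Measure.prod_apply hT']
  have hmapM : ∀ c : ℝ, μ.map M (Set.Iic c) = ENNReal.ofReal (parFp α c) ^ (n-1) := by
    intro c
    rw [Measure.map_apply hM measurableSet_Iic]
    have hset2 : M ⁻¹' Set.Iic c = ⋂ k ∈ T, {ω | X k ω ≤ c} := by
      ext ω
      simp only [Set.mem_preimage, Set.mem_Iic, Set.mem_iInter]
      rw [hMle ω c]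
      constructor
      · intro h k hk
        obtain ⟨j, hj, rfl⟩ := (hmemT k).mp hk
        exact h j hj
      · intro h j hj
        exact h _ ((hmemT _).mpr ⟨j, hj, rfl⟩)
    rw [hset2, hindep.meas_biInter (S := T) (s := fun k => {ω | X k ω ≤ c})
      (fun k _ => ⟨Set.Iic c, measurableSet_Iic, rfl⟩)]
    rw [Finset.prod_congr rfl (fun k _ => hcdf k c), Finset.prod_const, hcardT]
  have hslice : ∀ x : ℝ, μ.map M (Prod.mk x ⁻¹' {p : ℝ × ℝ | p.2 ≤ κ * p.1})
      = ENNReal.ofReal (parFp α (κ * x)) ^ (n-1) := by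
    intro x
    have : (Prod.mk x ⁻¹' {p : ℝ × ℝ | p.2 ≤ κ * p.1}) = Set.Iic (κ * x) := rfl
    rw [this, hmapM]
  rw [lintegral_congr hslice, hmapX, par_lintegral hα hκ0 hκ1 (n-1) (by omega)]
  congr 1
  have h' : (n - 1) + 1 = n := Nat.succ_pred_eq_of_pos (show 0 < n by omega)
  have hcast : ((n-1 : ℕ) : ℝ) + 1 = (n : ℝ) := by
    rw [show ((n-1:ℕ):ℝ) + 1 = (((n-1)+1 : ℕ) : ℝ) by push_cast; ring, h']
  rw [hcast]

lemma par_key_equiv {n : ℕ} (hn : 2 ≤ n) (f : Fin n → ℝ) (h1 : ∀ i, 1 ≤ f i)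
    {κ : ℝ} (hκ0 : 0 < κ) (hκ1 : κ < 1) :
    ((⨅ i : Fin n, ⨆ j : {j : Fin n // j ≠ i}, f j) ≤ κ * ⨆ i : Fin n, f i)
      ↔ ∃ i : Fin n, ∀ j : Fin n, j ≠ i → f j ≤ κ * f i := by
  haveI : Nontrivial (Fin n) := Fin.nontrivial_iff_two_le.mpr hn
  haveI hne : ∀ i : Fin n, Nonempty {j : Fin n // j ≠ i} := fun i => by
    obtain ⟨j, hj⟩ := exists_ne i
    exact ⟨⟨j, hj⟩⟩
  set g : Fin n → ℝ := fun i => ⨆ j : {j : Fin n // j ≠ i}, f j with hg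
  constructor
  · intro h
    obtain ⟨i₀, hi₀⟩ := Finite.exists_max f
    have hsup : (⨆ i, f i) = f i₀ :=
      le_antisymm (ciSup_le hi₀) (le_ciSup (Finite.bddAbove_range f) i₀)
    obtain ⟨i₁, hi₁⟩ := Finite.exists_min g
    have hinf : (⨅ i, g i) = g i₁ :=
      le_antisymm (ciInf_le (Finite.bddBelow_range g) i₁) (le_ciInf hi₁)
    rw [hinf, hsup] at h
    have hii : i₁ = i₀ := by
      by_contra hne'
      have h2 : f i₀ ≤ g i₁ :=
        le_ciSup (Finite.bddAbove_range (fun j : {j : Fin n // j ≠ i₁} => f j))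
          ⟨i₀, fun hc => hne' hc.symm⟩
      have h3 : f i₀ ≤ κ * f i₀ := le_trans h2 h
      nlinarith [h1 i₀]
    refine ⟨i₀, fun j hj => ?_⟩
    calc f j ≤ g i₀ :=
          le_ciSup (Finite.bddAbove_range (fun j' : {j' : Fin n // j' ≠ i₀} => f j')) ⟨j, hj⟩
      _ = g i₁ := by rw [hii]
      _ ≤ κ * f i₀ := h
  · rintro ⟨i, hi⟩
    have hfi1 : (1:ℝ) ≤ f i := h1 i
    have hsup : (⨆ j, f j) = f i := by
      apply le_antisymm
      · apply ciSup_le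
        intro j
        by_cases hj : j = i
        · rw [hj]
        · exact le_trans (hi j hj) (by nlinarith)
      · exact le_ciSup (Finite.bddAbove_range f) i
    have hgi : g i ≤ κ * f i := ciSup_le (fun j => hi j j.2)
    calc (⨅ i', g i') ≤ g i := ciInf_le (Finite.bddBelow_range g) i
      _ ≤ κ * f i := hgi
      _ = κ * ⨆ j, f j := by rw [hsup]

/-- For i.i.d. Pareto(α) random variables (CDF `F(x) = 1 - x^(-α)` for `x ≥ 1`, `0` else),
the probability that the second largest of the first `n` observations is at most `κ` times
the largest tends to `κ^α` as `n → ∞`, for any fixed `κ ∈ (0,1)`. -/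
theorem pareto_outlier_probability_tendsto
    {Ω : Type*} [MeasurableSpace Ω] (μ : Measure Ω) [IsProbabilityMeasure μ]
    (X : ℕ → Ω → ℝ)
    (hmeas : ∀ i, Measurable (X i))
    (hindep : iIndepFun X μ)
    (α : ℝ) (hα : 0 < α)
    (hcdf : ∀ i x, μ {ω | X i ω ≤ x}
        = ENNReal.ofReal (if 1 ≤ x then 1 - x ^ (-α) else 0))
    (κ : ℝ) (hκ : κ ∈ Ioo (0 : ℝ) 1) :
    Tendsto (fun n : ℕ =>
        (μ {ω | (⨅ i : Fin n, ⨆ j : {j : Fin n // j ≠ i}, X j ω)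
            ≤ κ * ⨆ i : Fin n, X i ω}).toReal)
      atTop (nhds (κ ^ α)) := by
  obtain ⟨hκ0, hκ1⟩ := hκ
  have hcdf' : ∀ i x, μ {ω | X i ω ≤ x} = ENNReal.ofReal (parFp α x) := hcdf
  set B : Set Ω := ⋃ k : ℕ, {ω | X k ω < 1} with hB
  have hBnull : μ B = 0 := by
    apply measure_iUnion_null
    intro k
    have hk : {ω | X k ω < 1} = ⋃ q : ℕ, {ω | X k ω ≤ 1 - 1/((q:ℝ)+1)} := by
      ext ω
      simp only [Set.mem_setOf_eq, Set.mem_iUnion]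
      constructor
      · intro h
        obtain ⟨q, hq⟩ := exists_nat_one_div_lt (show (0:ℝ) < 1 - X k ω by linarith)
        exact ⟨q, by push_cast at hq ⊢; linarith⟩
      · rintro ⟨q, hq⟩
        have : (0:ℝ) < 1/((q:ℝ)+1) := by positivity
        linarith
    rw [hk]
    apply measure_iUnion_null
    intro q
    rw [hcdf' k, ENNReal.ofReal_eq_zero]
    apply parFp_nonpos_of_le_one
    have : (0:ℝ) < 1/((q:ℝ)+1) := by positivity
    linarith
  have hae : ∀ᵐ ω ∂μ, ∀ k : ℕ, 1 ≤ X k ω := by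
    filter_upwards [measure_eq_zero_iff_ae_notMem.mp hBnull] with ω hω k
    by_contra hlt
    exact hω (Set.mem_iUnion.mpr ⟨k, lt_of_not_ge hlt⟩)
  have hconst : ∀ n : ℕ, 2 ≤ n →
      μ {ω | (⨅ i : Fin n, ⨆ j : {j : Fin n // j ≠ i}, X j ω) ≤ κ * ⨆ i : Fin n, X i ω}
        = ENNReal.ofReal (κ ^ α) := by
    intro n hn
    set A : Fin n → Set Ω := fun i => {ω | ∀ j : Fin n, j ≠ i → X j ω ≤ κ * X i ω} with hA
    have hAmeas : ∀ i, MeasurableSet (A i) := by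
      intro i
      have h2 : A i = ⋂ j : Fin n, ⋂ (_ : j ≠ i), {ω | X j ω ≤ κ * X i ω} := by
        ext ω
        simp [hA]
      rw [h2]
      exact MeasurableSet.iInter fun j => MeasurableSet.iInter fun _ =>
        measurableSet_le (hmeas _) ((hmeas _).const_mul κ)
    have haeq : {ω | (⨅ i : Fin n, ⨆ j : {j : Fin n // j ≠ i}, X j ω) ≤ κ * ⨆ i : Fin n, X i ω}
        =ᵐ[μ] ⋃ i : Fin n, A i := by
      rw [Filter.eventuallyEq_set]
      filter_upwards [hae] with ω hω
      simpa only [Set.mem_setOf_eq, Set.mem_iUnion, hA] using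
        par_key_equiv hn (fun i : Fin n => X i ω) (fun i => hω i) hκ0 hκ1
    have hpd : Pairwise (Function.onFun (AEDisjoint μ) A) := by
      intro i j hij
      apply measure_mono_null _ hBnull
      rintro ω ⟨hωi, hωj⟩
      have h1 : X j ω ≤ κ * X i ω := hωi j (Ne.symm hij)
      have h2 : X i ω ≤ κ * X j ω := hωj i hij
      refine Set.mem_iUnion.mpr ⟨(i : ℕ), ?_⟩
      simp only [Set.mem_setOf_eq]
      by_contra hge
      push_neg at hge
      have h3 : X i ω ≤ κ * κ * X i ω := by
        calc X (↑i) ω ≤ κ * X (↑j) ω := h2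
          _ ≤ κ * (κ * X (↑i) ω) := by nlinarith
          _ = κ * κ * X (↑i) ω := by ring
      have hκκ : κ * κ < 1 := by nlinarith
      nlinarith [mul_nonneg (sub_nonneg.mpr hge) (sub_nonneg.mpr hκκ.le)]
    rw [measure_congr haeq, measure_iUnion₀ hpd (fun i => (hAmeas i).nullMeasurableSet)]
    have hAi : ∀ i : Fin n, μ (A i) = ENNReal.ofReal (κ ^ α / n) := fun i =>
      par_measA μ X hmeas hindep hα hcdf' hκ0 hκ1 n hn i
    rw [tsum_fintype]
    rw [Finset.sum_congr rfl (fun i _ => hAi i), Finset.sum_const, Finset.card_univ,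
      Fintype.card_fin, nsmul_eq_mul, ← ENNReal.ofReal_natCast n,
      ← ENNReal.ofReal_mul (by positivity)]
    congr 1
    have hn0 : (n:ℝ) ≠ 0 := Nat.cast_ne_zero.mpr (by omega)
    field_simp
  have heq : ∀ᶠ n in atTop, (κ ^ α : ℝ) =
      (μ {ω | (⨅ i : Fin n, ⨆ j : {j : Fin n // j ≠ i}, X j ω)
          ≤ κ * ⨆ i : Fin n, X i ω}).toReal := by
    filter_upwards [eventually_ge_atTop 2] with n hn
    rw [hconst n hn, ENNReal.toReal_ofReal (Real.rpow_nonneg hκ0.le α)]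
  exact Tendsto.congr' heq tendsto_const_nhds
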